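/- For every point x of the subtour polytope S^n, every vertex of the support graph of x has degree at least 2, and if x is an extreme point that is not the incidence vector of a Hamiltonian cycle, then its support graph has at least one vertex of degree at least 3. -/

import Mathlib

open Finset
open scoped Classical

noncomputable section

/-- Edge set of the complete graph `K_n` as non-diagonal elements of `Sym2 (Fin n)`. -/
def edgeSet (n : ℕ) : Finset (Sym2 (Fin n)) :=
  Finset.univ.filter (fun e => ¬ e.IsDiag)

/-- The cut `δ(S)`: edges with exactly one endpoint in `S`. -/
def cut {n : ℕ} (S : Finset (Fin n)) : Finset (Sym2 (Fin n)) :=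
  Finset.univ.filter (fun e => ¬ e.IsDiag ∧ ∃ u v : Fin n, e = s(u, v) ∧ u ∈ S ∧ v ∉ S)

/-- Membership in the subtour polytope `S^n`. -/
def InSubtour (n : ℕ) (x : Sym2 (Fin n) → ℝ) : Prop :=
  (∀ e ∈ edgeSet n, 0 ≤ x e ∧ x e ≤ 1) ∧
  (∀ v : Fin n, ∑ e ∈ cut ({v} : Finset (Fin n)), x e = 2) ∧
  (∀ S : Finset (Fin n), 2 ≤ S.card → S.card ≤ n - 2 → 2 ≤ ∑ e ∈ cut S, x e)

/-- Extreme point of the subtour polytope: not a proper convex combination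
(equivalently, not the midpoint of two distinct points of `S^n`). -/
def IsExtremePt (n : ℕ) (x : Sym2 (Fin n) → ℝ) : Prop :=
  InSubtour n x ∧
  ∀ y z : Sym2 (Fin n) → ℝ, InSubtour n y → InSubtour n z →
    (∀ e ∈ edgeSet n, x e = (y e + z e) / 2) → ∀ e ∈ edgeSet n, y e = z e

/-- Support edges of `x`: edges with strictly positive value. -/
def supportEdges {n : ℕ} (x : Sym2 (Fin n) → ℝ) : Finset (Sym2 (Fin n)) :=
  (edgeSet n).filter (fun e => 0 < x e)

/-- Degree of a vertex in the support graph of `x`. -/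
def supDeg {n : ℕ} (x : Sym2 (Fin n) → ℝ) (v : Fin n) : ℕ :=
  (cut ({v} : Finset (Fin n)) ∩ supportEdges x).card

/-- `x` is the incidence vector of a Hamiltonian cycle of `K_n`. -/
def IsHamCycle (n : ℕ) (x : Sym2 (Fin n) → ℝ) : Prop :=
  ∃ σ : Equiv.Perm (Fin n), σ.IsCycle ∧ σ.support = Finset.univ ∧
    ∀ e ∈ edgeSet n, x e = if (∃ v : Fin n, e = s(v, σ v)) then 1 else 0

/-- Cost `c^T x` over the edges of `K_n`. -/
def cost {n : ℕ} (c x : Sym2 (Fin n) → ℝ) : ℝ := ∑ e ∈ edgeSet n, c e * x e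

/-- `c` is a metric cost function: nonnegative (symmetry is built into `Sym2`)
and satisfying the triangle inequality. -/
def IsMetricCost (n : ℕ) (c : Sym2 (Fin n) → ℝ) : Prop :=
  (∀ e, 0 ≤ c e) ∧ ∀ i j k : Fin n, c s(i, k) ≤ c s(i, j) + c s(j, k)

section AuxST
variable {n : ℕ} (x : Sym2 (Fin n) → ℝ)

lemma mem_edgeSet' {e : Sym2 (Fin n)} : e ∈ edgeSet n ↔ ¬ e.IsDiag := by
  simp [edgeSet]

lemma mk_mem_edgeSet {v w : Fin n} (h : w ≠ v) : s(v, w) ∈ edgeSet n := by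
  rw [mem_edgeSet', Sym2.mk_isDiag_iff]
  exact fun hc => h hc.symm

lemma mem_cut_singleton {v : Fin n} {e : Sym2 (Fin n)} :
    e ∈ cut ({v} : Finset (Fin n)) ↔ ∃ w, w ≠ v ∧ e = s(v, w) := by
  simp only [cut, Finset.mem_filter, Finset.mem_univ, true_and, Finset.mem_singleton]
  constructor
  · rintro ⟨hd, u, w, rfl, rfl, hw⟩
    exact ⟨w, hw, rfl⟩
  · rintro ⟨w, hw, rfl⟩
    refine ⟨?_, v, w, rfl, rfl, hw⟩
    rw [Sym2.mk_isDiag_iff]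
    exact fun hc => hw hc.symm

lemma cut_subset_edgeSet (S : Finset (Fin n)) : cut S ⊆ edgeSet n := by
  intro e he
  simp only [cut, Finset.mem_filter] at he
  rw [mem_edgeSet']
  exact he.2.1

def nbr (v : Fin n) : Finset (Fin n) := univ.filter fun w => w ≠ v ∧ 0 < x s(v, w)

lemma mem_nbr {v w : Fin n} : w ∈ nbr x v ↔ w ≠ v ∧ 0 < x s(v, w) := by simp [nbr]

lemma nbr_symm {v w : Fin n} (h : w ∈ nbr x v) : v ∈ nbr x w := by
  rw [mem_nbr] at h ⊢
  refine ⟨fun hvw => h.1 hvw.symm, ?_⟩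
  rw [Sym2.eq_swap]
  exact h.2

lemma not_self_mem_nbr (v : Fin n) : v ∉ nbr x v := fun h => ((mem_nbr x).mp h).1 rfl

lemma cut_inter (v : Fin n) :
    cut ({v} : Finset (Fin n)) ∩ supportEdges x = (nbr x v).image fun w => s(v, w) := by
  ext e
  simp only [Finset.mem_inter, mem_cut_singleton, supportEdges, Finset.mem_filter,
    Finset.mem_image, mem_nbr]
  constructor
  · rintro ⟨⟨w, hw, rfl⟩, _, hpos⟩
    exact ⟨w, ⟨hw, hpos⟩, rfl⟩
  · rintro ⟨w, ⟨hw, hpos⟩, rfl⟩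
    exact ⟨⟨w, hw, rfl⟩, mk_mem_edgeSet hw, hpos⟩

lemma supDeg_eq (v : Fin n) : supDeg x v = (nbr x v).card := by
  rw [supDeg, cut_inter, Finset.card_image_of_injOn]
  intro a ha b hb hab
  rw [Finset.mem_coe, mem_nbr] at ha hb
  rcases Sym2.eq_iff.mp hab with ⟨-, h⟩ | ⟨h1, h2⟩
  · exact h
  · exact absurd h2 ha.1

lemma sum_cut_inter (hx : InSubtour n x) (v : Fin n) :
    ∑ e ∈ cut ({v} : Finset (Fin n)) ∩ supportEdges x, x e = 2 := by
  have h2 : ∑ e ∈ cut ({v} : Finset (Fin n)), x e = 2 := hx.2.1 v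
  have hzero : ∀ e ∈ cut ({v} : Finset (Fin n)) \ supportEdges x, x e = 0 := by
    intro e he
    rw [Finset.mem_sdiff] at he
    have hed : e ∈ edgeSet n := cut_subset_edgeSet _ he.1
    have h0 := (hx.1 e hed).1
    have hnp : ¬ 0 < x e := fun hpos => he.2 (Finset.mem_filter.mpr ⟨hed, hpos⟩)
    exact le_antisymm (not_lt.mp hnp) h0
  have hsplit := Finset.sum_inter_add_sum_sdiff (cut ({v} : Finset (Fin n))) (supportEdges x) x
  rw [Finset.sum_eq_zero hzero, add_zero] at hsplit
  rw [hsplit, h2]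

lemma two_le_supDeg (hx : InSubtour n x) (v : Fin n) : 2 ≤ supDeg x v := by
  have hs := sum_cut_inter x hx v
  have hle : ∑ e ∈ cut ({v} : Finset (Fin n)) ∩ supportEdges x, x e ≤ (supDeg x v : ℝ) := by
    have := Finset.sum_le_card_nsmul (cut ({v} : Finset (Fin n)) ∩ supportEdges x) x 1
      (fun e he => (hx.1 e (cut_subset_edgeSet _ (Finset.mem_inter.mp he).1)).2)
    simpa [supDeg] using this
  have : (2 : ℝ) ≤ (supDeg x v : ℝ) := by rw [← hs]; exact hle
  exact_mod_cast this

lemma x_one (hx : InSubtour n x) {v w : Fin n} (hd : supDeg x v = 2) (hw : w ∈ nbr x v) :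
    x s(v, w) = 1 := by
  have htc : (cut ({v} : Finset (Fin n)) ∩ supportEdges x).card = 2 := hd
  have het : s(v, w) ∈ cut ({v} : Finset (Fin n)) ∩ supportEdges x := by
    rw [cut_inter]
    exact Finset.mem_image_of_mem _ hw
  have hsum := sum_cut_inter x hx v
  have hadd := Finset.add_sum_erase _ x het
  have hec : ((cut ({v} : Finset (Fin n)) ∩ supportEdges x).erase s(v, w)).card = 1 := by
    rw [Finset.card_erase_of_mem het, htc]
  have herle : ∑ e ∈ (cut ({v} : Finset (Fin n)) ∩ supportEdges x).erase s(v, w), x e ≤ 1 := by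
    have := Finset.sum_le_card_nsmul ((cut ({v} : Finset (Fin n)) ∩ supportEdges x).erase s(v, w)) x 1
      (fun e he => (hx.1 e (cut_subset_edgeSet _
        (Finset.mem_inter.mp (Finset.mem_of_mem_erase he)).1)).2)
    rw [hec] at this
    simpa using this
  have hle1 : x s(v, w) ≤ 1 := (hx.1 _ (mk_mem_edgeSet ((mem_nbr x).mp hw).1)).2
  linarith [hadd, hsum]

def nxt (a b : Fin n) : Fin n :=
  if h : ((nbr x b).erase a).Nonempty then h.choose else b

lemma nxt_spec {a b : Fin n} (hcard : (nbr x b).card = 2) (ha : a ∈ nbr x b) :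
    nxt x a b ∈ nbr x b ∧ nxt x a b ≠ a ∧ ∀ c ∈ nbr x b, c ≠ a → c = nxt x a b := by
  have hs : ((nbr x b).erase a).card = 1 := by
    rw [Finset.card_erase_of_mem ha, hcard]
  have hne : ((nbr x b).erase a).Nonempty := by
    rw [← Finset.card_pos, hs]; norm_num
  have hdef : nxt x a b = hne.choose := dif_pos hne
  have hmem := hne.choose_spec
  rw [Finset.mem_erase] at hmem
  refine ⟨hdef ▸ hmem.2, hdef ▸ hmem.1, ?_⟩
  intro c hc hca
  have h1 := Finset.card_le_one.mp (le_of_eq hs)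
  rw [hdef]
  exact h1 c (Finset.mem_erase.mpr ⟨hca, hc⟩) hne.choose hne.choose_spec

def pth (v0 v1 : Fin n) : ℕ → Fin n
  | 0 => v0
  | 1 => v1
  | (k+2) => nxt x (pth v0 v1 k) (pth v0 v1 (k+1))

lemma pth_adj {v0 v1 : Fin n} (hcard : ∀ v, (nbr x v).card = 2) (hv1 : v1 ∈ nbr x v0) :
    ∀ k, pth x v0 v1 (k+1) ∈ nbr x (pth x v0 v1 k) := by
  intro k
  induction k with
  | zero => exact hv1
  | succ m ih =>
    have hsym := nbr_symm x ih
    exact (nxt_spec x (hcard _) hsym).1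

lemma pth_ne {v0 v1 : Fin n} (hcard : ∀ v, (nbr x v).card = 2) (hv1 : v1 ∈ nbr x v0) :
    ∀ k, pth x v0 v1 (k+2) ≠ pth x v0 v1 k := by
  intro k
  have hsym := nbr_symm x (pth_adj x hcard hv1 k)
  exact (nxt_spec x (hcard _) hsym).2.1

end AuxST

lemma ham_of_deg2 (m : ℕ) (hn : 3 ≤ m + 1) (x : Sym2 (Fin (m + 1)) → ℝ)
    (hx : InSubtour (m + 1) x)
    (hd2 : ∀ v, supDeg x v = 2) : IsHamCycle (m + 1) x := by
  have hcard : ∀ v, (nbr x v).card = 2 := fun v => by rw [← supDeg_eq]; exact hd2 v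
  have hone : ∀ v w, w ∈ nbr x v → x s(v, w) = 1 := fun v w hw => x_one x hx (hd2 v) hw
  set v0 : Fin (m + 1) := ⟨0, by omega⟩ with hv0
  have hne0 : (nbr x v0).Nonempty := by rw [← Finset.card_pos, hcard]; norm_num
  obtain ⟨v1, hv1⟩ := hne0
  set p : ℕ → Fin (m + 1) := pth x v0 v1 with hp
  have hA : ∀ k, p (k+1) ∈ nbr x (p k) := pth_adj x hcard hv1
  have hB : ∀ k, p (k+2) ≠ p k := pth_ne x hcard hv1
  -- pigeonhole: a repeat occurs by step (m + 1)
  have hpig : ∃ j, (∃ i, i < j ∧ p i = p j) ∧ j ≤ (m + 1) := by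
    obtain ⟨a, ha, b, hb, hab, he⟩ := Finset.exists_ne_map_eq_of_card_lt_of_maps_to
      (s := Finset.range ((m + 1)+1)) (t := (Finset.univ : Finset (Fin (m + 1))))
      (by simp) (fun a _ => Finset.mem_univ (p a))
    rw [Finset.mem_range] at ha hb
    rcases lt_or_gt_of_ne hab with h | h
    · exact ⟨b, ⟨a, h, he⟩, by omega⟩
    · exact ⟨a, ⟨b, h, he.symm⟩, by omega⟩
  have hQ : ∃ j, ∃ i, i < j ∧ p i = p j := ⟨hpig.choose, hpig.choose_spec.1⟩
  set J := Nat.find hQ with hJdef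
  have hQJ : ∃ i, i < J ∧ p i = p J := Nat.find_spec hQ
  have hJle : J ≤ (m + 1) := le_trans (Nat.find_le hpig.choose_spec.1) hpig.choose_spec.2
  have hinj : ∀ a b, a < b → b < J → p a ≠ p b := by
    intro a b h1 h2 he
    exact Nat.find_min hQ h2 ⟨a, h1, he⟩
  have hinj' : ∀ a b, a < J → b < J → p a = p b → a = b := by
    intro a b ha hb he
    by_contra hne
    rcases lt_or_gt_of_ne hne with h | h
    · exact hinj a b h hb he
    · exact hinj b a h ha he.symm
  obtain ⟨i0, hi0J, hpi0⟩ := hQJ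
  have hi00 : i0 = 0 := by
    by_contra h0
    have h1 : 1 ≤ i0 := by omega
    have hi1 : i0 + 1 ≠ J := by
      intro h
      have hm := hA i0
      rw [h, ← hpi0] at hm
      exact not_self_mem_nbr x _ hm
    have hi1' : i0 + 1 < J := by omega
    have hi2 : i0 + 2 ≠ J := by
      intro h
      apply hB i0
      rw [h, ← hpi0]
    have hi2' : i0 + 2 < J := by omega
    have m1 : p (i0 - 1) ∈ nbr x (p i0) := by
      have h := hA (i0 - 1)
      rw [show i0 - 1 + 1 = i0 by omega] at h
      exact nbr_symm x h
    have m2 : p (i0 + 1) ∈ nbr x (p i0) := hA i0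
    have m3 : p (J - 1) ∈ nbr x (p i0) := by
      have h := hA (J - 1)
      rw [show J - 1 + 1 = J by omega, ← hpi0] at h
      exact nbr_symm x h
    have d12 : p (i0 - 1) ≠ p (i0 + 1) := hinj _ _ (by omega) hi1'
    have d13 : p (i0 - 1) ≠ p (J - 1) := hinj _ _ (by omega) (by omega)
    have d23 : p (i0 + 1) ≠ p (J - 1) := hinj _ _ (by omega) (by omega)
    have hsub : ({p (i0-1), p (i0+1), p (J-1)} : Finset (Fin (m + 1))) ⊆ nbr x (p i0) := by
      intro c hc
      simp only [Finset.mem_insert, Finset.mem_singleton] at hc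
      rcases hc with rfl | rfl | rfl <;> assumption
    have hc3 : ({p (i0-1), p (i0+1), p (J-1)} : Finset (Fin (m + 1))).card = 3 := by
      rw [Finset.card_insert_of_notMem (by simp [d12, d13]),
        Finset.card_insert_of_notMem (by simp [d23]), Finset.card_singleton]
    have hle := Finset.card_le_card hsub
    rw [hc3, hcard] at hle
    omega
  subst hi00
  have hp0 : p J = p 0 := hpi0.symm
  have hJ3 : 3 ≤ J := by
    have h1 : J ≠ 1 := by
      intro h
      have h01 := ((mem_nbr x).mp (hA 0)).1
      rw [h] at hp0
      exact h01 hp0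
    have h2 : J ≠ 2 := by
      intro h
      rw [h] at hp0
      exact hB 0 hp0
    omega
  set S : Finset (Fin (m + 1)) := (Finset.range J).image p with hS
  have hScard : S.card = J := by
    rw [hS, Finset.card_image_of_injOn, Finset.card_range]
    intro a ha b hb he
    rw [Finset.mem_coe, Finset.mem_range] at ha hb
    exact hinj' a b ha hb he
  have hkS : ∀ l, l < J → p l ∈ S := fun l hl =>
    Finset.mem_image_of_mem p (Finset.mem_range.mpr hl)
  have hnbrS : ∀ v ∈ S, nbr x v ⊆ S := by
    intro v hv
    rw [hS, Finset.mem_image] at hv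
    obtain ⟨k, hk, rfl⟩ := hv
    rw [Finset.mem_range] at hk
    have key : ∃ l1 l2, l1 < J ∧ l2 < J ∧ l1 ≠ l2 ∧
        p l1 ∈ nbr x (p k) ∧ p l2 ∈ nbr x (p k) := by
      by_cases hk0 : k = 0
      · subst hk0
        refine ⟨1, J - 1, by omega, by omega, by omega, hA 0, ?_⟩
        have h := hA (J - 1)
        rw [show J - 1 + 1 = J by omega, hp0] at h
        exact nbr_symm x h
      · by_cases hk1 : k + 1 = J
        · refine ⟨k - 1, 0, by omega, by omega, by omega, ?_, ?_⟩
          · have h := hA (k - 1)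
            rw [show k - 1 + 1 = k by omega] at h
            exact nbr_symm x h
          · have h := hA k
            rw [hk1, hp0] at h
            exact h
        · refine ⟨k - 1, k + 1, by omega, by omega, by omega, ?_, hA k⟩
          have h := hA (k - 1)
          rw [show k - 1 + 1 = k by omega] at h
          exact nbr_symm x h
    obtain ⟨l1, l2, h1, h2, h12, mm1, mm2⟩ := key
    have hpne : p l1 ≠ p l2 := fun h => h12 (hinj' _ _ h1 h2 h)
    have hpair : ({p l1, p l2} : Finset (Fin (m + 1))) ⊆ nbr x (p k) := by
      intro c hc
      simp only [Finset.mem_insert, Finset.mem_singleton] at hc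
      rcases hc with rfl | rfl <;> assumption
    have hpc : ({p l1, p l2} : Finset (Fin (m + 1))).card = 2 := by
      rw [Finset.card_insert_of_notMem (by simpa using hpne), Finset.card_singleton]
    have heq : ({p l1, p l2} : Finset (Fin (m + 1))) = nbr x (p k) :=
      Finset.eq_of_subset_of_card_le hpair (by rw [hpc, hcard])
    rw [← heq]
    intro c hc
    simp only [Finset.mem_insert, Finset.mem_singleton] at hc
    rcases hc with rfl | rfl
    · exact hkS _ h1
    · exact hkS _ h2
  have hcut0 : ∑ e ∈ cut S, x e = 0 := by
    apply Finset.sum_eq_zero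
    intro e he
    have hed : e ∈ edgeSet (m + 1) := cut_subset_edgeSet _ he
    simp only [cut, Finset.mem_filter] at he
    obtain ⟨-, hd, u, v, rfl, hu, hv⟩ := he
    by_contra hne
    have hpos : 0 < x s(u, v) := lt_of_le_of_ne (hx.1 _ hed).1 (Ne.symm hne)
    have hvu : v ≠ u := by
      intro h
      apply hd
      rw [Sym2.mk_isDiag_iff]
      exact h.symm
    have hmem : v ∈ nbr x u := (mem_nbr x).mpr ⟨hvu, hpos⟩
    exact hv (hnbrS u hu hmem)
  have hJb : ¬ (J ≤ (m + 1) - 2) := by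
    intro h
    have h2 := hx.2.2 S (by omega) (by omega)
    rw [hcut0] at h2
    linarith
  have hJn : J = (m + 1) := by
    by_contra h
    have hJ' : J = (m + 1) - 1 := by omega
    have hSc : Sᶜ.card = 1 := by
      rw [Finset.card_compl, hScard]
      simp only [Fintype.card_fin]
      omega
    obtain ⟨w, hw⟩ := Finset.card_eq_one.mp hSc
    have hwS : w ∉ S := by
      rw [← Finset.mem_compl, hw]
      exact Finset.mem_singleton_self w
    have hnw : (nbr x w).Nonempty := by rw [← Finset.card_pos, hcard]; norm_num
    obtain ⟨u, hu⟩ := hnw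
    have huw : u ≠ w := ((mem_nbr x).mp hu).1
    have huS : u ∈ S := by
      by_contra h'
      have : u ∈ Sᶜ := Finset.mem_compl.mpr h'
      rw [hw, Finset.mem_singleton] at this
      exact huw this
    exact hwS (hnbrS u huS (nbr_symm x hu))
  -- now J = (m + 1) : build the permutation
  have hinjn : ∀ a b, a < (m + 1) → b < (m + 1) → p a = p b → a = b := by
    intro a b ha hb
    exact hinj' a b (by omega) (by omega)
  have hpn : p (m + 1) = p 0 := by
    have h := hp0
    rw [hJn] at h
    exact h
  set P : Fin (m + 1) → Fin (m + 1) := fun i => p i.val with hPdef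
  have hPinj : Function.Injective P := fun a b he => Fin.ext (hinjn _ _ a.isLt b.isLt he)
  have hPbij : Function.Bijective P := Finite.injective_iff_bijective.mp hPinj
  set pe : Equiv.Perm (Fin (m + 1)) := Equiv.ofBijective P hPbij with hpe
  set σ : Equiv.Perm (Fin (m + 1)) := pe * finRotate (m + 1) * pe⁻¹ with hσdef
  have hpeP : ∀ k : Fin (m + 1), pe k = P k := fun k => rfl
  have hσP : ∀ k : Fin (m + 1), σ (P k) = P (k + 1) := by
    intro k
    have h1 : pe⁻¹ (P k) = k := by
      rw [← hpeP]
      exact Equiv.symm_apply_apply pe k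
    have h2 : finRotate (m + 1) k = k + 1 := finRotate_succ_apply k
    rw [hσdef]
    simp only [Equiv.Perm.mul_apply]
    rw [h1, h2, hpeP]
  have hval : ∀ k : Fin (m + 1), (k + 1 : Fin (m + 1)).val = if k.val + 1 = (m + 1) then 0 else k.val + 1 := by
    intro k
    rw [Fin.val_add_one]
    by_cases h : k = Fin.last m
    · rw [if_pos h, if_pos]
      rw [h, Fin.val_last]
    · rw [if_neg h, if_neg]
      intro hc
      apply h
      exact Fin.ext (by rw [Fin.val_last]; omega)
  have hP1 : ∀ k : Fin (m + 1), P (k + 1) ∈ nbr x (P k) := by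
    intro k
    show p ((k + 1 : Fin (m + 1)).val) ∈ nbr x (p k.val)
    rw [hval]
    by_cases h : k.val + 1 = (m + 1)
    · rw [if_pos h]
      have hh := hA k.val
      rw [h, hpn] at hh
      exact hh
    · rw [if_neg h]
      exact hA k.val
  have h2ne : ∀ k : Fin (m + 1), k + 1 + 1 ≠ k := by
    intro k h
    have e1 := hval k
    have e2 := hval (k + 1)
    have e3 : (k + 1 + 1 : Fin (m + 1)).val = k.val := by rw [h]
    have hk := k.isLt
    have hk1 := (k + 1 : Fin (m + 1)).isLt
    rw [e3] at e2
    split_ifs at e1 e2 <;> omega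
  have hpair : ∀ k : Fin (m + 1), nbr x (P k) = {P (k - 1), P (k + 1)} := by
    intro k
    have m1 : P (k - 1) ∈ nbr x (P k) := by
      have h := hP1 (k - 1)
      rw [sub_add_cancel] at h
      exact nbr_symm x h
    have m2 : P (k + 1) ∈ nbr x (P k) := hP1 k
    have hne : P (k - 1) ≠ P (k + 1) := by
      intro h
      have he : k - 1 = k + 1 := hPinj h
      apply h2ne k
      rw [← he, sub_add_cancel]
    symm
    apply Finset.eq_of_subset_of_card_le
    · intro c hc
      simp only [Finset.mem_insert, Finset.mem_singleton] at hc
      rcases hc with rfl | rfl <;> assumption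
    · rw [hcard, Finset.card_insert_of_notMem (by simpa using hne), Finset.card_singleton]
  refine ⟨σ, ?_, ?_, ?_⟩
  · exact (isCycle_finRotate_of_le (by omega)).conj
  · rw [hσdef, Equiv.Perm.support_conj, support_finRotate_of_le (by omega)]
    exact Finset.map_univ_equiv pe
  · intro e he
    revert he
    induction e using Sym2.ind with
    | _ a b =>
      intro he
      have hab : a ≠ b := by
        rw [mem_edgeSet', Sym2.mk_isDiag_iff] at he
        exact he
      split_ifs with h
      · obtain ⟨v, hv⟩ := h
        obtain ⟨k, rfl⟩ := hPbij.2 v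
        rw [hv, hσP]
        exact hone _ _ (hP1 k)
      · by_contra hne0'
        have hpos : 0 < x s(a, b) := lt_of_le_of_ne (hx.1 _ he).1 (Ne.symm hne0')
        have hbn : b ∈ nbr x a := (mem_nbr x).mpr ⟨fun h' => hab h'.symm, hpos⟩
        obtain ⟨k, rfl⟩ := hPbij.2 a
        rw [hpair k] at hbn
        simp only [Finset.mem_insert, Finset.mem_singleton] at hbn
        rcases hbn with rfl | rfl
        · apply h
          refine ⟨P (k - 1), ?_⟩
          rw [hσP, sub_add_cancel, Sym2.eq_swap]
        · exact h ⟨P k, by rw [hσP]⟩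

/-- Every vertex of the support graph of a point of `S^n` has degree at least 2,
and an extreme point which is not a Hamiltonian cycle incidence vector has a
vertex of support degree at least 3. -/
theorem support_degrees (n : ℕ) (hn : 3 ≤ n) (x : Sym2 (Fin n) → ℝ)
    (hx : InSubtour n x) :
    (∀ v : Fin n, 2 ≤ supDeg x v) ∧
    (IsExtremePt n x → ¬ IsHamCycle n x → ∃ v : Fin n, 3 ≤ supDeg x v) := by
  constructor
  · exact two_le_supDeg x hx
  · intro _hext hham
    by_contra hno
    push_neg at hno
    have hd2 : ∀ v, supDeg x v = 2 := fun v =>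
      le_antisymm (by have := hno v; omega) (two_le_supDeg x hx v)
    obtain ⟨m, rfl⟩ : ∃ m, n = m + 1 := ⟨n - 1, by omega⟩
    exact hham (ham_of_deg2 m hn x hx hd2)
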